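/- arXiv:1409.1999 — 3 statements merged into one kernel-verified Lean document; each statement's English description precedes it below -/
import Mathlib

section
/- Let A ∈ ℝ^{m×n} be totally unimodular with full row rank, b ∈ ℝ^m with y := Aᵀ(AAᵀ)⁻¹b ≠ 0, k := ‖y‖₂/(m + n²), and L a basis of A. Then ‖⌈A_L⁻¹ b / k⌉‖∞ ≤ m·n·(m + n²) + 1. -/
open Matrix

/-- Euclidean norm of a finite real vector. -/
noncomputable def norm2 {ι : Type*} [Fintype ι] (x : ι → ℝ) : ℝ :=
  Real.sqrt (∑ i, (x i) ^ 2)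

/-- Sup norm of a finite real vector. -/
noncomputable def normInf {ι : Type*} [Fintype ι] (x : ι → ℝ) : ℝ :=
  ⨆ i, |x i|

lemma sign_abs_le {r : ℝ} (h : r ∈ Set.range (SignType.cast : SignType → ℝ)) : |r| ≤ 1 := by
  obtain ⟨s, rfl⟩ := h; cases s <;> norm_num

lemma TU_det_abs_le {p : ℕ} {B : Matrix (Fin p) (Fin p) ℝ} (hB : B.IsTotallyUnimodular) :
    |B.det| ≤ 1 := by
  have := hB p id id Function.injective_id Function.injective_id
  rw [submatrix_id_id] at this
  exact sign_abs_le this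

lemma TU_inv_entry {p : ℕ} {B : Matrix (Fin p) (Fin p) ℝ} (hB : B.IsTotallyUnimodular)
    (hd : IsUnit B.det) (i j : Fin p) : |B⁻¹ i j| ≤ 1 := by
  have hdet : |B.det| = 1 := by
    rcases hB p id id Function.injective_id Function.injective_id with ⟨s, hs⟩
    rw [submatrix_id_id] at hs
    cases s with
    | zero => exfalso; rw [← hs] at hd; simp at hd
    | pos => rw [← hs]; norm_num
    | neg => rw [← hs]; norm_num
  have hadj : |B.adjugate i j| ≤ 1 := by
    cases p with
    | zero => exact i.elim0
    | succ q =>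
      rw [adjugate_fin_succ_eq_det_submatrix]
      rw [abs_mul, abs_pow, abs_neg, abs_one, one_pow, one_mul]
      exact TU_det_abs_le (hB.submatrix _ _)
  rw [inv_def, Ring.inverse_eq_inv']
  simp only [Matrix.smul_apply, smul_eq_mul, abs_mul, abs_inv, hdet, inv_one, one_mul]
  exact hadj

/-- Let `A ∈ ℝ^{m×n}` be totally unimodular with full row rank, `b` with
`y := Aᵀ(AAᵀ)⁻¹b ≠ 0`, `k := ‖y‖₂/(m + n²)`, and `L` a basis of `A`.
Then `‖⌈A_L⁻¹ b / k⌉‖∞ ≤ m·n·(m + n²) + 1`. -/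
theorem stmt8 {m n : ℕ} (A : Matrix (Fin m) (Fin n) ℝ)
    (hTU : A.IsTotallyUnimodular) (hrank : A.rank = m)
    (hinv : IsUnit (A * Aᵀ).det)
    (b : Fin m → ℝ) (hb : (Aᵀ * (A * Aᵀ)⁻¹).mulVec b ≠ 0)
    (L : Fin m → Fin n) (hL : Function.Injective L)
    (hAL : IsUnit (A.submatrix id L).det)
    (k : ℝ) (hk : k = norm2 ((Aᵀ * (A * Aᵀ)⁻¹).mulVec b) / (m + n ^ 2)) :
    normInf (fun i => (⌈((A.submatrix id L)⁻¹.mulVec b) i / k⌉ : ℝ))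
      ≤ m * n * (m + n ^ 2) + 1 := by
  set y : Fin n → ℝ := (Aᵀ * (A * Aᵀ)⁻¹).mulVec b with hy
  set C : ℝ := m * n * (m + n ^ 2) with hC
  -- n ≥ 1
  have hn : 0 < n := by
    rcases Nat.eq_zero_or_pos n with h0 | h0
    · exfalso; apply hb; subst h0; funext i; exact i.elim0
    · exact h0
  have hM : (0 : ℝ) < (m : ℝ) + (n : ℝ) ^ 2 := by
    have : (1 : ℝ) ≤ (n : ℝ) := by exact_mod_cast hn
    nlinarith [Nat.cast_nonneg (α := ℝ) m]
  -- A y = b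
  have hAy : A.mulVec y = b := by
    have h1 : A * (Aᵀ * (A * Aᵀ)⁻¹) = 1 := by
      rw [← Matrix.mul_assoc, Matrix.mul_nonsing_inv _ hinv]
    rw [hy, Matrix.mulVec_mulVec, h1, Matrix.one_mulVec]
  -- norm2 y > 0
  have hy2 : 0 < norm2 y := by
    rw [norm2]
    apply Real.sqrt_pos.mpr
    obtain ⟨i0, hi0⟩ := Function.ne_iff.mp hb
    have hne : y i0 ≠ 0 := hi0
    calc (0 : ℝ) < y i0 ^ 2 := by positivity
      _ ≤ ∑ i, y i ^ 2 :=
        Finset.single_le_sum (fun i _ => sq_nonneg (y i)) (Finset.mem_univ i0)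
  have hkpos : 0 < k := by rw [hk]; exact div_pos hy2 hM
  -- entries of y bounded by norm2 y
  have hyl : ∀ l, |y l| ≤ norm2 y := by
    intro l
    rw [← Real.sqrt_sq_eq_abs, norm2]
    exact Real.sqrt_le_sqrt
      (Finset.single_le_sum (fun i _ => sq_nonneg (y i)) (Finset.mem_univ l))
  -- entries of b bounded by n * norm2 y
  have hbj : ∀ j, |b j| ≤ n * norm2 y := by
    intro j
    rw [← hAy, Matrix.mulVec, dotProduct]
    calc |∑ l, A j l * y l| ≤ ∑ l, |A j l * y l| := Finset.abs_sum_le_sum_abs _ _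
      _ ≤ ∑ _l : Fin n, norm2 y := by
        apply Finset.sum_le_sum
        intro l _
        rw [abs_mul]
        calc |A j l| * |y l| ≤ 1 * norm2 y :=
          mul_le_mul (sign_abs_le (hTU.apply j l)) (hyl l) (abs_nonneg _) zero_le_one
          _ = norm2 y := one_mul _
      _ = n * norm2 y := by
        rw [Finset.sum_const, Finset.card_univ, Fintype.card_fin, nsmul_eq_mul]
  -- entries of B⁻¹ b bounded
  have hBTU : (A.submatrix id L).IsTotallyUnimodular := hTU.submatrix id L
  have hz : ∀ i, |((A.submatrix id L)⁻¹.mulVec b) i| ≤ m * (n * norm2 y) := by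
    intro i
    rw [Matrix.mulVec, dotProduct]
    calc |∑ j, (A.submatrix id L)⁻¹ i j * b j|
        ≤ ∑ j, |(A.submatrix id L)⁻¹ i j * b j| := Finset.abs_sum_le_sum_abs _ _
      _ ≤ ∑ _j : Fin m, n * norm2 y := by
        apply Finset.sum_le_sum
        intro j _
        rw [abs_mul]
        calc |(A.submatrix id L)⁻¹ i j| * |b j| ≤ 1 * (n * norm2 y) :=
          mul_le_mul (TU_inv_entry hBTU hAL i j) (hbj j) (abs_nonneg _) zero_le_one
          _ = n * norm2 y := one_mul _
      _ = m * (n * norm2 y) := by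
        rw [Finset.sum_const, Finset.card_univ, Fintype.card_fin, nsmul_eq_mul]
  -- per-coordinate bound on the ceilings
  have key : ∀ i, |(⌈((A.submatrix id L)⁻¹.mulVec b) i / k⌉ : ℝ)| ≤ C + 1 := by
    intro i
    have hx : |((A.submatrix id L)⁻¹.mulVec b) i / k| ≤ C := by
      rw [abs_div, abs_of_pos hkpos, div_le_iff₀ hkpos, hk]
      have heq : C * (norm2 y / ((m : ℝ) + (n : ℝ) ^ 2)) = m * (n * norm2 y) := by
        rw [hC]; field_simp
      rw [heq]
      exact hz i
    set x : ℝ := ((A.submatrix id L)⁻¹.mulVec b) i / k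
    obtain ⟨hx1, hx2⟩ := abs_le.mp hx
    rw [abs_le]
    constructor
    · calc -(C + 1) ≤ -C := by linarith
        _ ≤ x := hx1
        _ ≤ ⌈x⌉ := Int.le_ceil x
    · calc ((⌈x⌉ : ℤ) : ℝ) ≤ x + 1 := le_of_lt (Int.ceil_lt_add_one x)
        _ ≤ C + 1 := by linarith
  -- conclude
  rw [normInf]
  rcases Nat.eq_zero_or_pos m with hm | hm
  · subst hm
    rw [show (⨆ i : Fin 0, |((fun i => (⌈((A.submatrix id L)⁻¹.mulVec b) i / k⌉ : ℝ)) i)|) = 0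
        from Real.iSup_of_isEmpty _]
    positivity
  · haveI : Nonempty (Fin m) := ⟨⟨0, hm⟩⟩
    exact ciSup_le fun i => key i
end

section
/- Combining the previous bounds: for the rounded auxiliary problem with constraint matrix E = [I, A_L⁻¹ A_{L̄}] (totally unimodular) and right-hand side ⌈A_L⁻¹ b / k⌉ where k = ‖Aᵀ(AAᵀ)⁻¹b‖₂/(m + n²), every basic solution x satisfies ‖x‖∞ ≤ m(m n (m + n²) + 1). -/
open Matrix

lemma abs_le_one_of_signType {x : ℝ} (hx : x ∈ Set.range (SignType.cast : SignType → ℝ)) :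
    |x| ≤ 1 := by
  obtain ⟨s, rfl⟩ := hx
  cases s <;> norm_num

lemma tu_inv_entry_abs {m : ℕ} {M : Matrix (Fin m) (Fin m) ℝ} (hM : M.IsTotallyUnimodular)
    (hdet : IsUnit M.det) (i j : Fin m) : |M⁻¹ i j| ≤ 1 := by
  have hdet1 : |M.det| = 1 := by
    obtain ⟨s, hs⟩ := hM m id id Function.injective_id Function.injective_id
    rw [Matrix.submatrix_id_id] at hs
    cases s with
    | zero => exfalso; rw [← hs] at hdet; simp at hdet
    | pos => rw [← hs]; norm_num
    | neg => rw [← hs]; norm_num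
  have hadj : |M.adjugate i j| ≤ 1 := by
    have heq : M.updateRow j (Pi.single i 1) =
        (fromRows M (1 : Matrix (Fin m) (Fin m) ℝ)).submatrix
          (fun r => if r = j then Sum.inr i else Sum.inl r) id := by
      ext r c
      by_cases hr : r = j
      · subst hr
        simp [Matrix.updateRow_self, Matrix.one_apply, Pi.single_apply, eq_comm]
      · simp [Matrix.updateRow_ne hr, hr]
    rw [Matrix.adjugate_apply, heq]
    apply abs_le_one_of_signType
    have := (Matrix.fromRows_one_isTotallyUnimodular_iff M).mpr hM
    rw [Matrix.isTotallyUnimodular_iff] at this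
    exact this m _ id
  rw [Matrix.inv_def]
  simp only [Matrix.smul_apply, smul_eq_mul, abs_mul]
  rw [Ring.inverse_eq_inv]
  calc |M.det⁻¹| * |M.adjugate i j| ≤ |M.det⁻¹| * 1 :=
        mul_le_mul_of_nonneg_left hadj (abs_nonneg _)
    _ = 1 := by rw [mul_one, abs_inv, hdet1]; norm_num

lemma tu_inv_mulVec_bound {m : ℕ} {M : Matrix (Fin m) (Fin m) ℝ} (hM : M.IsTotallyUnimodular)
    (hdet : IsUnit M.det) {v : Fin m → ℝ} {C : ℝ} (hv : ∀ j, |v j| ≤ C)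
    (i : Fin m) : |M⁻¹.mulVec v i| ≤ m * C := by
  rw [Matrix.mulVec, dotProduct]
  calc |∑ j, M⁻¹ i j * v j| ≤ ∑ j, |M⁻¹ i j * v j| := Finset.abs_sum_le_sum_abs _ _
    _ ≤ ∑ _j : Fin m, 1 * C := by
        apply Finset.sum_le_sum
        intro j _
        rw [abs_mul]
        exact mul_le_mul (tu_inv_entry_abs hM hdet i j) (hv j) (abs_nonneg _) zero_le_one
    _ = m * C := by simp


/-- For the rounded auxiliary problem with constraint matrix
`E = [I, A_L⁻¹ A_{L̄}]` (totally unimodular) and right-hand side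
`⌈A_L⁻¹ b / k⌉` where `k = ‖Aᵀ(AAᵀ)⁻¹b‖₂/(m + n²)`, every basic solution `x`
satisfies `‖x‖∞ ≤ m(mn(m + n²) + 1)`. -/
theorem stmt10 {m n p : ℕ} (A : Matrix (Fin m) (Fin n) ℝ)
    (hTU : A.IsTotallyUnimodular) (hrank : A.rank = m)
    (hinv : IsUnit (A * Aᵀ).det)
    (b : Fin m → ℝ) (hb : (Aᵀ * (A * Aᵀ)⁻¹).mulVec b ≠ 0)
    (L : Fin m → Fin n) (hL : Function.Injective L)
    (hAL : IsUnit (A.submatrix id L).det)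
    (Lbar : Fin p → Fin n) (hLbar : Function.Injective Lbar)
    (E : Matrix (Fin m) (Fin m ⊕ Fin p) ℝ)
    (hE : E = Matrix.fromCols 1 ((A.submatrix id L)⁻¹ * A.submatrix id Lbar))
    (hETU : E.IsTotallyUnimodular)
    (k : ℝ) (hk : k = norm2 ((Aᵀ * (A * Aᵀ)⁻¹).mulVec b) / (m + n ^ 2))
    (g : Fin m → ℝ)
    (hg : g = fun i => (⌈((A.submatrix id L)⁻¹.mulVec b) i / k⌉ : ℝ))
    (B : Fin m → Fin m ⊕ Fin p) (hB : Function.Injective B)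
    (hEB : IsUnit (E.submatrix id B).det)
    (x : Fin m ⊕ Fin p → ℝ)
    (hxB : x ∘ B = (E.submatrix id B)⁻¹.mulVec g)
    (hx0 : ∀ j, j ∉ Set.range B → x j = 0) :
    normInf x ≤ m * (m * n * (m + n ^ 2) + 1) := by
  set u : Fin n → ℝ := (Aᵀ * (A * Aᵀ)⁻¹).mulVec b with hu
  -- basic positivity facts
  obtain ⟨j₀, hj₀⟩ : ∃ j, u j ≠ 0 := by
    by_contra h
    push_neg at h
    exact hb (funext h)
  have hn2 : (0 : ℝ) < (m : ℝ) + (n : ℝ) ^ 2 := by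
    have hn : 0 < n := j₀.pos
    have : (1 : ℝ) ≤ (n : ℝ) := by exact_mod_cast hn
    nlinarith [Nat.cast_nonneg (α := ℝ) m]
  have hu2pos : 0 < norm2 u := by
    rw [norm2]
    apply Real.sqrt_pos.mpr
    have h1 : 0 < u j₀ ^ 2 := by positivity
    have h2 : u j₀ ^ 2 ≤ ∑ i, u i ^ 2 :=
      Finset.single_le_sum (fun i _ => sq_nonneg (u i)) (Finset.mem_univ j₀)
    linarith
  have hupt : ∀ j, |u j| ≤ norm2 u := by
    intro j
    rw [norm2, ← Real.sqrt_sq_eq_abs]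
    exact Real.sqrt_le_sqrt
      (Finset.single_le_sum (fun i _ => sq_nonneg (u i)) (Finset.mem_univ j))
  have hkpos : 0 < k := by
    rw [hk]
    exact div_pos hu2pos hn2
  have hu2k : norm2 u = k * ((m : ℝ) + (n : ℝ) ^ 2) := by
    rw [hk]
    field_simp
  -- b = A.mulVec u
  have hbu : b = A.mulVec u := by
    rw [hu, Matrix.mulVec_mulVec, ← Matrix.mul_assoc, Matrix.mul_nonsing_inv _ hinv,
      Matrix.one_mulVec]
  -- entries of (A.submatrix id L)⁻¹ are bounded by 1
  have hALTU : (A.submatrix id L).IsTotallyUnimodular := hTU.submatrix id L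
  have hALinv : ∀ i r, |(A.submatrix id L)⁻¹ i r| ≤ 1 := tu_inv_entry_abs hALTU hAL
  -- bound on y := (A.submatrix id L)⁻¹.mulVec b
  have hy : ∀ i, |((A.submatrix id L)⁻¹.mulVec b) i| ≤ (m : ℝ) * n * norm2 u := by
    intro i
    rw [hbu, Matrix.mulVec_mulVec]
    set C := (A.submatrix id L)⁻¹ * A with hC
    have hCij : ∀ i j, |C i j| ≤ (m : ℝ) := by
      intro i j
      rw [hC, Matrix.mul_apply]
      calc |∑ r, (A.submatrix id L)⁻¹ i r * A r j|
          ≤ ∑ r, |(A.submatrix id L)⁻¹ i r * A r j| := Finset.abs_sum_le_sum_abs _ _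
        _ ≤ ∑ _r : Fin m, (1 : ℝ) * 1 := by
            apply Finset.sum_le_sum
            intro r _
            rw [abs_mul]
            exact mul_le_mul (hALinv i r) (abs_le_one_of_signType (hTU.apply r j))
              (abs_nonneg _) zero_le_one
        _ = (m : ℝ) := by simp
    rw [Matrix.mulVec, dotProduct]
    calc |∑ j, C i j * u j| ≤ ∑ j, |C i j * u j| := Finset.abs_sum_le_sum_abs _ _
      _ ≤ ∑ _j : Fin n, (m : ℝ) * norm2 u := by
          apply Finset.sum_le_sum
          intro j _
          rw [abs_mul]
          exact mul_le_mul (hCij i j) (hupt j) (abs_nonneg _) (Nat.cast_nonneg m)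
      _ = (m : ℝ) * n * norm2 u := by
          rw [Finset.sum_const, Finset.card_univ, Fintype.card_fin]
          push_cast; ring
  -- bound on g
  have hgbound : ∀ i, |g i| ≤ (m : ℝ) * n * ((m : ℝ) + (n : ℝ) ^ 2) + 1 := by
    intro i
    rw [hg]
    set t := ((A.submatrix id L)⁻¹.mulVec b) i / k with ht
    have htb : |t| ≤ (m : ℝ) * n * ((m : ℝ) + (n : ℝ) ^ 2) := by
      rw [ht, abs_div, abs_of_pos hkpos, div_le_iff₀ hkpos]
      calc |((A.submatrix id L)⁻¹.mulVec b) i| ≤ (m : ℝ) * n * norm2 u := hy i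
        _ = (m : ℝ) * ↑n * ((m : ℝ) + (n : ℝ) ^ 2) * k := by rw [hu2k]; ring
    have h1 : (⌈t⌉ : ℝ) < t + 1 := Int.ceil_lt_add_one t
    have h2 : t ≤ (⌈t⌉ : ℝ) := Int.le_ceil t
    rw [abs_le] at htb ⊢
    constructor <;> [linarith [htb.1]; linarith [htb.2]]
  have hGnn : (0 : ℝ) ≤ (m : ℝ) * n * ((m : ℝ) + (n : ℝ) ^ 2) + 1 := by positivity
  -- bound on x
  have hEBTU : (E.submatrix id B).IsTotallyUnimodular := hETU.submatrix id B
  have hxj : ∀ j, |x j| ≤ (m : ℝ) * ((m : ℝ) * n * ((m : ℝ) + (n : ℝ) ^ 2) + 1) := by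
    intro j
    by_cases hj : j ∈ Set.range B
    · obtain ⟨i, rfl⟩ := hj
      have := tu_inv_mulVec_bound hEBTU hEB hgbound i
      rw [← congrFun hxB i] at this
      exact this
    · rw [hx0 j hj, abs_zero]
      positivity
  rw [normInf]
  have hcast : ((m : ℝ) * ((m : ℝ) * n * ((m : ℝ) + (n : ℝ) ^ 2) + 1) : ℝ) =
      (m : ℝ) * ((m : ℝ) * (n : ℝ) * ((m : ℝ) + (n : ℝ) ^ 2) + 1) := by ring
  apply Real.iSup_le hxj
  positivity
end

section
/- Sensitivity theorem (Schrijver 10.5, special TU case): Let à be a totally unimodular p × n matrix, c ∈ ℝ^n, and b'', b* ∈ ℝ^p such that both max{cᵀx : Ãx ≤ b''} and max{cᵀx : Ãx ≤ b*} are finite. Then for each optimal solution x'' of the first problem there exists an optimal solution x* of the second with ‖x'' − x*‖∞ ≤ n ‖b'' − b*‖∞. -/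
open Matrix

section SensHelpers

abbrev sgns : Set ℝ := Set.range (SignType.cast : SignType → ℝ)

lemma mem_sgns_iff {x : ℝ} : x ∈ sgns ↔ x = 0 ∨ x = 1 ∨ x = -1 := by
  constructor
  · rintro ⟨s, rfl⟩; cases s <;> simp
  · rintro (rfl | rfl | rfl)
    exacts [⟨0, rfl⟩, ⟨1, rfl⟩, ⟨-1, by simp⟩]

lemma sgns_mul {x y : ℝ} (hx : x ∈ sgns) (hy : y ∈ sgns) : x * y ∈ sgns := by
  rw [mem_sgns_iff] at *
  rcases hx with rfl|rfl|rfl <;> rcases hy with rfl|rfl|rfl <;> norm_num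

lemma sgns_neg {x : ℝ} (hx : x ∈ sgns) : -x ∈ sgns := by
  rw [mem_sgns_iff] at *
  rcases hx with rfl|rfl|rfl <;> norm_num

lemma sgns_abs_le {x : ℝ} (hx : x ∈ sgns) : |x| ≤ 1 := by
  rw [mem_sgns_iff] at hx
  rcases hx with rfl|rfl|rfl <;> norm_num

/-- scaling rows of a TU matrix by signs preserves TU -/
lemma tu_rowScale {m n : Type*} {A : Matrix m n ℝ} (hA : A.IsTotallyUnimodular)
    (s : m → ℝ) (hs : ∀ i, s i ∈ sgns) :
    (Matrix.of fun i j => s i * A i j).IsTotallyUnimodular := by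
  rw [Matrix.isTotallyUnimodular_iff]
  intro k f g
  have : ((Matrix.of fun i j => s i * A i j).submatrix f g)
      = Matrix.of fun i j => (s ∘ f) i * (A.submatrix f g) i j := by
    ext i j; simp
  rw [this, Matrix.det_mul_column]
  rw [Matrix.isTotallyUnimodular_iff] at hA
  refine sgns_mul ?_ (hA k f g)
  · -- product of signs is a sign
    classical
    induction (Finset.univ : Finset (Fin k)) using Finset.induction with
    | empty => simpa using mem_sgns_iff.mpr (Or.inr (Or.inl rfl))
    | insert _ _ h ih => rw [Finset.prod_insert h]; exact sgns_mul (hs _) ih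

/-- the inverse of a nonsingular TU matrix has entries in {0, ±1} -/
lemma tu_inv_mem {n : ℕ} {M : Matrix (Fin n) (Fin n) ℝ} (hM : M.IsTotallyUnimodular)
    (hdet : M.det ≠ 0) (i j : Fin n) : M⁻¹ i j ∈ sgns := by
  have hdetmem : M.det ∈ sgns := by
    simpa using hM n id id Function.injective_id Function.injective_id
  have hdet1 : M.det = 1 ∨ M.det = -1 := by
    rcases mem_sgns_iff.mp hdetmem with h|h|h
    · exact absurd h hdet
    · exact Or.inl h
    · exact Or.inr h
  have hadj : M.adjugate i j ∈ sgns := by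
    rw [Matrix.adjugate_apply]
    have hTU2 : (Matrix.fromRows M (1 : Matrix (Fin n) (Fin n) ℝ)).IsTotallyUnimodular :=
      (Matrix.fromRows_one_isTotallyUnimodular_iff M).mpr hM
    have heq : M.updateRow j (Pi.single i 1)
        = (Matrix.fromRows M (1 : Matrix (Fin n) (Fin n) ℝ)).submatrix
            (fun k => if k = j then Sum.inr i else Sum.inl k) id := by
      ext k l
      by_cases hk : k = j
      · subst hk
        simp [Matrix.updateRow_apply, Matrix.one_apply, Pi.single_apply, eq_comm]
      · simp [Matrix.updateRow_apply, hk]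
    rw [heq]
    rw [Matrix.isTotallyUnimodular_iff] at hTU2
    exact hTU2 n _ id
  have hinv : M⁻¹ = M.det⁻¹ • M.adjugate := by
    rw [Matrix.inv_def, Ring.inverse_eq_inv]
  rw [hinv]
  simp only [Matrix.smul_apply, smul_eq_mul]
  rcases hdet1 with h|h <;> rw [h] <;>
    [skip; rw [show ((-1:ℝ))⁻¹ = -1 by norm_num]]
  · simpa using hadj
  · simpa using sgns_neg hadj

/-- if the span of `T` is not everything, some nonzero vector annihilates `T` via dot product -/
lemma exists_ann {n : ℕ} (T : Set (Fin n → ℝ)) (hT : Submodule.span ℝ T ≠ ⊤) :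
    ∃ w : Fin n → ℝ, w ≠ 0 ∧ ∀ v ∈ T, v ⬝ᵥ w = 0 := by
  set e : (Fin n → ℝ) ≃ₗ[ℝ] EuclideanSpace ℝ (Fin n) := (WithLp.linearEquiv 2 ℝ (Fin n → ℝ)).symm
  set U : Submodule ℝ (EuclideanSpace ℝ (Fin n)) := (Submodule.span ℝ T).map (e : (Fin n → ℝ) →ₗ[ℝ] EuclideanSpace ℝ (Fin n))
  have hU : U ≠ ⊤ := by
    intro h
    apply hT
    have h2 : Submodule.map (e : (Fin n → ℝ) →ₗ[ℝ] EuclideanSpace ℝ (Fin n)) ⊤ = ⊤ := by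
      rw [Submodule.map_top, LinearEquiv.range]
    exact Submodule.map_injective_of_injective e.injective (h.trans h2.symm)
  have horth : Uᗮ ≠ ⊥ := by
    intro h
    exact hU (Submodule.orthogonal_eq_bot_iff.mp h)
  obtain ⟨w', hw'U, hw'0⟩ := Submodule.exists_mem_ne_zero_of_ne_bot horth
  refine ⟨(WithLp.linearEquiv 2 ℝ (Fin n → ℝ)) w', ?_, ?_⟩
  · simpa using hw'0
  · intro v hv
    have hvU : e v ∈ U := Submodule.mem_map_of_mem (Submodule.subset_span hv)
    have := (Submodule.mem_orthogonal U w').mp hw'U _ hvU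
    calc v ⬝ᵥ (WithLp.linearEquiv 2 ℝ (Fin n → ℝ)) w'
        = inner ℝ (e v) w' := by
          rw [PiLp.inner_apply]
          simp [dotProduct, e, mul_comm]
      _ = 0 := this

/-- Conic Carathéodory: any nonnegative combination can be rewritten using at most `n` vectors
from the same family-property. -/
lemma cone_caratheodory {n : ℕ} (P : (Fin n → ℝ) → Prop) :
    ∀ (T : ℕ) (lam : Fin T → ℝ) (d : Fin T → (Fin n → ℝ)),
      (∀ k, 0 ≤ lam k) → (∀ k, P (d k)) →
    ∃ (t : ℕ), t ≤ n ∧ ∃ (mu : Fin t → ℝ) (g : Fin t → (Fin n → ℝ)),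
      (∀ k, 0 ≤ mu k) ∧ (∀ k, P (g k)) ∧ ∑ k, mu k • g k = ∑ k, lam k • d k := by
  intro T
  induction T using Nat.strong_induction_on with
  | _ T IH =>
  intro lam d hlam hd
  by_cases hTn : T ≤ n
  · exact ⟨T, hTn, lam, d, hlam, hd, rfl⟩
  push_neg at hTn
  -- the family is linearly dependent
  have hdep : ¬ LinearIndependent ℝ d := by
    intro h
    have := h.fintype_card_le_finrank
    rw [Module.finrank_fin_fun] at this
    simp only [Fintype.card_fin] at this
    omega
  obtain ⟨g, hgsum, i₀, hgi₀⟩ := Fintype.not_linearIndependent_iff.mp hdep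
  -- get a relation with some positive coefficient
  obtain ⟨cc, hcsum, j₀, hcj₀⟩ :
      ∃ cc : Fin T → ℝ, ∑ k, cc k • d k = 0 ∧ ∃ j, 0 < cc j := by
    rcases lt_or_gt_of_ne hgi₀ with h|h
    · refine ⟨-g, ?_, i₀, by simpa using h⟩
      simp only [Pi.neg_apply, neg_smul, Finset.sum_neg_distrib, hgsum, neg_zero]
    · exact ⟨g, hgsum, i₀, h⟩
  classical
  set F : Finset (Fin T) := Finset.univ.filter (fun k => 0 < cc k) with hF
  have hFne : F.Nonempty := ⟨j₀, by simp [hF, hcj₀]⟩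
  obtain ⟨k₀, hk₀F, hk₀⟩ := F.exists_mem_eq_inf' hFne (fun k => lam k / cc k)
  have hck₀ : 0 < cc k₀ := by simpa [hF] using hk₀F
  set τ : ℝ := lam k₀ / cc k₀ with hτdef
  have hτ : F.inf' hFne (fun k => lam k / cc k) = τ := hk₀
  have hτ0 : 0 ≤ τ := div_nonneg (hlam k₀) hck₀.le
  set lam' : Fin T → ℝ := fun k => lam k - τ * cc k with hlam'
  have hlam'nn : ∀ k, 0 ≤ lam' k := by
    intro k
    by_cases hck : 0 < cc k
    · have : τ ≤ lam k / cc k := hτ ▸ Finset.inf'_le _ (by simp [hF, hck])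
      have := (le_div_iff₀ hck).mp this
      simp only [hlam']; linarith
    · push_neg at hck
      have : τ * cc k ≤ 0 := mul_nonpos_of_nonneg_of_nonpos hτ0 hck
      have := hlam k
      simp only [hlam']; linarith
  have hlam'k₀ : lam' k₀ = 0 := by
    simp only [hlam', hτdef]
    field_simp
    ring
  have hsum' : ∑ k, lam' k • d k = ∑ k, lam k • d k := by
    have : ∀ k : Fin T, lam' k • d k = lam k • d k - τ • (cc k • d k) := by
      intro k
      simp only [hlam', sub_smul, smul_smul]
    simp only [this, Finset.sum_sub_distrib, ← Finset.smul_sum, hcsum, smul_zero, sub_zero]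
  -- drop index k₀
  obtain ⟨T', rfl⟩ : ∃ T', T = T' + 1 := ⟨T - 1, by omega⟩
  have hdrop : ∑ k, (lam' ∘ k₀.succAbove) k • (d ∘ k₀.succAbove) k = ∑ k, lam k • d k := by
    rw [← hsum', Fin.sum_univ_succAbove (fun k => lam' k • d k) k₀, hlam'k₀, zero_smul, zero_add]
    rfl
  obtain ⟨t, htn, mu, gg, hmu, hgg, heq⟩ :=
    IH T' (by omega) (lam' ∘ k₀.succAbove) (d ∘ k₀.succAbove)
      (fun k => hlam'nn _) (fun k => hd _)
  exact ⟨t, htn, mu, gg, hmu, hgg, heq.trans hdrop⟩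

/-- left dot product with fixed `z` as a linear map -/
noncomputable def dotL {n : ℕ} (z : Fin n → ℝ) : (Fin n → ℝ) →ₗ[ℝ] ℝ where
  toFun v := v ⬝ᵥ z
  map_add' a b := add_dotProduct a b z
  map_smul' c a := smul_dotProduct c a z

lemma dot_zero_of_span {n : ℕ} {T : Set (Fin n → ℝ)} {z : Fin n → ℝ}
    (h : ∀ v ∈ T, v ⬝ᵥ z = 0) : ∀ v ∈ Submodule.span ℝ T, v ⬝ᵥ z = 0 := by
  intro v hv
  have hle : Submodule.span ℝ T ≤ LinearMap.ker (dotL z) :=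
    Submodule.span_le.mpr (fun x hx => by simpa [dotL, LinearMap.mem_ker] using h x hx)
  simpa [dotL, LinearMap.mem_ker] using hle hv

lemma extreme_structure {n : ℕ} {q : Type*} [Fintype q] {Bh : Matrix q (Fin n) ℝ}
    (hBh : Bh.IsTotallyUnimodular) (e : Fin n → ℝ) {z : Fin n → ℝ}
    (hz : z ∈ Set.extremePoints ℝ {x : Fin n → ℝ | (∀ i, Bh.mulVec x i ≤ 0) ∧ e ⬝ᵥ x = 1}) :
    ∃ (t : ℝ) (d : Fin n → ℝ), 0 < t ∧ (∀ j, d j ∈ sgns) ∧ z = t • d := by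
  classical
  obtain ⟨⟨hzle, hze⟩, hzext⟩ := hz
  have hz0 : z ≠ 0 := by rintro rfl; simp at hze
  have he0 : e ≠ 0 := by rintro rfl; simp at hze
  obtain ⟨N, rfl⟩ : ∃ N, n = N + 1 := by
    refine ⟨n - 1, ?_⟩
    rcases Nat.eq_zero_or_pos n with h|h
    · exact absurd (funext fun j : Fin n => (h ▸ j).elim0) hz0
    · omega
  -- tight rows
  set T : Set (Fin (N+1) → ℝ) := {v | (∃ i, v = Bh i) ∧ v ⬝ᵥ z = 0} with hT
  -- span of T together with e is everything
  have hspan : Submodule.span ℝ (insert e T) = ⊤ := by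
    by_contra hne
    obtain ⟨w, hw0, hw⟩ := exists_ann _ hne
    have hew : e ⬝ᵥ w = 0 := hw e (Set.mem_insert _ _)
    have hTw : ∀ v ∈ T, v ⬝ᵥ w = 0 := fun v hv => hw v (Set.mem_insert_of_mem _ hv)
    set F : Finset q := Finset.univ.filter (fun i => Bh.mulVec z i < 0) with hF
    set δ : ℝ := if hFne : F.Nonempty
      then min 1 (F.inf' hFne (fun i => (-(Bh.mulVec z i)) / (|Bh i ⬝ᵥ w| + 1))) else 1 with hδ
    have hδpos : 0 < δ := by
      rw [hδ]
      split_ifs with hFne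
      · refine lt_min one_pos ?_
        rw [Finset.lt_inf'_iff]
        intro i hi
        have h1 : Bh.mulVec z i < 0 := by simpa [hF] using hi
        have h2 : (0:ℝ) < |Bh i ⬝ᵥ w| + 1 := by positivity
        have h3 : (0:ℝ) < -(Bh.mulVec z i) := by linarith
        positivity
      · exact one_pos
    have hδle : ∀ i ∈ F, δ * |Bh i ⬝ᵥ w| ≤ -(Bh.mulVec z i) := by
      intro i hi
      have hFne : F.Nonempty := ⟨i, hi⟩
      have h1 : Bh.mulVec z i < 0 := by simpa [hF] using hi
      have hδ' : δ ≤ (-(Bh.mulVec z i)) / (|Bh i ⬝ᵥ w| + 1) := by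
        rw [hδ, dif_pos hFne]
        exact le_trans (min_le_right _ _) (Finset.inf'_le _ hi)
      have h2 : (0:ℝ) < |Bh i ⬝ᵥ w| + 1 := by positivity
      calc δ * |Bh i ⬝ᵥ w| ≤ ((-(Bh.mulVec z i)) / (|Bh i ⬝ᵥ w| + 1)) * |Bh i ⬝ᵥ w| :=
            mul_le_mul_of_nonneg_right hδ' (abs_nonneg _)
        _ ≤ -(Bh.mulVec z i) := by
            rw [div_mul_eq_mul_div, div_le_iff₀ h2]
            nlinarith [abs_nonneg (Bh i ⬝ᵥ w)]
    have key : ∀ s : ℝ, |s| ≤ δ →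
        (z + s • w) ∈ {x : Fin (N+1) → ℝ | (∀ i, Bh.mulVec x i ≤ 0) ∧ e ⬝ᵥ x = 1} := by
      intro s hs
      constructor
      · intro i
        have hmv : Bh.mulVec (z + s • w) i = Bh.mulVec z i + s * (Bh i ⬝ᵥ w) := by
          rw [Matrix.mulVec_add, Matrix.mulVec_smul]
          rfl
        by_cases htight : Bh.mulVec z i = 0
        · have hrow : Bh i ∈ T := ⟨⟨i, rfl⟩, htight⟩
          have hw' := hTw _ hrow
          rw [hmv, htight, hw', mul_zero, add_zero]
        · have hi : i ∈ F := by
            simp only [hF, Finset.mem_filter, Finset.mem_univ, true_and]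
            exact lt_of_le_of_ne (hzle i) htight
          have h1 := hδle i hi
          have h2 : s * (Bh i ⬝ᵥ w) ≤ δ * |Bh i ⬝ᵥ w| := by
            calc s * (Bh i ⬝ᵥ w) ≤ |s * (Bh i ⬝ᵥ w)| := le_abs_self _
              _ = |s| * |Bh i ⬝ᵥ w| := abs_mul _ _
              _ ≤ δ * |Bh i ⬝ᵥ w| := mul_le_mul_of_nonneg_right hs (abs_nonneg _)
          rw [hmv]; linarith
      · rw [dotProduct_add, dotProduct_smul, hew, smul_zero, add_zero, hze]
    have hseg : z ∈ openSegment ℝ (z + δ • w) (z + (-δ) • w) := by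
      refine ⟨1/2, 1/2, by norm_num, by norm_num, by norm_num, ?_⟩
      ext j
      simp only [Pi.add_apply, Pi.smul_apply, smul_eq_mul]
      ring
    have hcontr := hzext (key δ (by rw [abs_of_pos hδpos]))
      (key (-δ) (by rw [abs_neg, abs_of_pos hδpos])) hseg
    have h1 : δ • w = 0 := by
      have := hcontr
      have h2 : z + δ • w - z = 0 := by rw [this]; ring
      simpa using h2
    exact hw0 (by simpa [hδpos.ne'] using (smul_eq_zero.mp h1))
  have hTne : Submodule.span ℝ T ≠ ⊤ := by
    intro h
    have := dot_zero_of_span (fun v hv => hv.2) z (h ▸ Submodule.mem_top)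
    exact hz0 (dotProduct_self_eq_zero.mp this)
  -- dimension count
  have hrle : Module.finrank ℝ (Submodule.span ℝ T) ≤ N := by
    have := Submodule.finrank_lt (K := ℝ) (V := Fin (N+1) → ℝ) hTne
    rw [Module.finrank_fin_fun] at this
    omega
  have hrge : N ≤ Module.finrank ℝ (Submodule.span ℝ T) := by
    have h1 : (⊤ : Submodule ℝ (Fin (N+1) → ℝ)) = (Submodule.span ℝ {e}) ⊔ Submodule.span ℝ T := by
      rw [← hspan, Submodule.span_insert]
    have h2 := Submodule.finrank_add_le_finrank_add_finrank
      (Submodule.span ℝ {e}) (Submodule.span ℝ T)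
    rw [← h1, finrank_top, Module.finrank_fin_fun] at h2
    have h3 : Module.finrank ℝ (Submodule.span ℝ ({e} : Set (Fin (N+1) → ℝ))) = 1 := by
      have : Submodule.span ℝ ({e} : Set (Fin (N+1) → ℝ)) = ℝ ∙ e := rfl
      rw [this]
      exact finrank_span_singleton he0
    omega
  -- extract a basis of the span of T
  obtain ⟨s, hsT, hsspan, hsind⟩ := exists_linearIndependent ℝ T
  have hsfin : s.Finite := hsind.setFinite
  haveI := hsfin.fintype
  have hscard : Fintype.card s = N := by
    have h1 := finrank_span_set_eq_card hsind
    rw [hsspan] at h1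
    rw [← Set.toFinset_card]
    omega
  set φ := Fintype.equivFinOfCardEq hscard with hφ
  obtain ⟨m, hm⟩ : ∃ m, z m ≠ 0 := by
    by_contra h; push_neg at h; exact hz0 (funext h)
  have hrowex : ∀ v : s, ∃ i : q, (v : Fin (N+1) → ℝ) = Bh i := fun v => (hsT v.2).1
  choose rowIdx hrowIdx using hrowex
  set M : Matrix (Fin (N+1)) (Fin (N+1)) ℝ :=
    Matrix.of fun i => Fin.lastCases (Pi.single m 1)
      (fun k => ((φ.symm k : Fin (N+1) → ℝ))) i with hM
  have hMrow_last : ∀ j, M (Fin.last N) j = (Pi.single m 1 : Fin (N+1) → ℝ) j := by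
    intro j; rw [hM]; simp
  have hMrow_cast : ∀ (k : Fin N) j, M k.castSucc j = (φ.symm k : Fin (N+1) → ℝ) j := by
    intro k j; rw [hM]; simp
  have hMTU : M.IsTotallyUnimodular := by
    have hMsub : M = (Matrix.fromRows Bh (1 : Matrix (Fin (N+1)) (Fin (N+1)) ℝ)).submatrix
        (Fin.lastCases (Sum.inr m) (fun k => Sum.inl (rowIdx (φ.symm k)))) id := by
      ext i j
      refine Fin.lastCases ?_ (fun k => ?_) i
      · rw [hMrow_last]
        simp [Matrix.one_apply, Pi.single_apply, eq_comm]
      · rw [hMrow_cast]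
        simp [← hrowIdx]
    rw [hMsub]
    exact ((Matrix.fromRows_one_isTotallyUnimodular_iff Bh).mpr hBh).submatrix _ id
  have hdet : M.det ≠ 0 := by
    intro hdet0
    obtain ⟨v, hv0, hvM⟩ := (Matrix.exists_mulVec_eq_zero_iff).mpr hdet0
    have hvm : v m = 0 := by
      have := congrFun hvM (Fin.last N)
      simpa [Matrix.mulVec, hMrow_last, single_dotProduct] using this
    have hbase : ∀ x ∈ s, x ⬝ᵥ v = 0 := by
      intro x hx
      have hk := congrFun hvM ((φ ⟨x, hx⟩).castSucc)
      have : (φ.symm (φ ⟨x, hx⟩) : Fin (N+1) → ℝ) ⬝ᵥ v = 0 := by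
        simpa [Matrix.mulVec, hMrow_cast] using hk
      rwa [Equiv.symm_apply_apply] at this
    have hsv : ∀ x ∈ Submodule.span ℝ T, x ⬝ᵥ v = 0 := by
      rw [← hsspan]; exact dot_zero_of_span hbase
    set β := e ⬝ᵥ v with hβ
    set v' := v - β • z with hv'
    have hv'ann : ∀ x ∈ insert e T, x ⬝ᵥ v' = 0 := by
      intro x hx
      rw [hv', dotProduct_sub, dotProduct_smul]
      rcases hx with rfl|hx
      · rw [hze, hβ]; simp
      · rw [hx.2, hsv x (Submodule.subset_span hx), smul_zero, sub_zero]
    have hv'0 : v' = 0 := by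
      have hall := dot_zero_of_span hv'ann
      rw [hspan] at hall
      exact dotProduct_self_eq_zero.mp (hall v' Submodule.mem_top)
    have hveq : v = β • z := by
      have h := hv'0
      rw [hv'] at h
      exact sub_eq_zero.mp h
    have hβ0 : β = 0 := by
      have := congrFun hveq m
      simp only [Pi.smul_apply, smul_eq_mul] at this
      rw [hvm] at this
      rcases mul_eq_zero.mp this.symm with h|h
      · exact h
      · exact absurd h hm
    exact hv0 (by rw [hveq, hβ0, zero_smul])
  have hMz : M *ᵥ z = Pi.single (Fin.last N) (z m) := by
    ext i
    refine Fin.lastCases ?_ (fun k => ?_) i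
    · have : M (Fin.last N) ⬝ᵥ z = z m := by
        have : M (Fin.last N) = (Pi.single m 1 : Fin (N+1) → ℝ) := funext hMrow_last
        rw [this, single_dotProduct, one_mul]
      simpa [Matrix.mulVec] using this
    · have hmem : ((φ.symm k : Fin (N+1) → ℝ)) ∈ T := hsT (φ.symm k).2
      have : M k.castSucc ⬝ᵥ z = 0 := by
        have h2 : M k.castSucc = (φ.symm k : Fin (N+1) → ℝ) := funext (hMrow_cast k)
        rw [h2]; exact hmem.2
      simp only [Matrix.mulVec] at this ⊢
      rw [this, Pi.single_apply]
      rw [if_neg (Fin.castSucc_lt_last k).ne]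
  have hzf : z = (z m) • (fun i => M⁻¹ i (Fin.last N)) := by
    have h1 : M⁻¹ *ᵥ (M *ᵥ z) = z := by
      rw [Matrix.mulVec_mulVec, Matrix.nonsing_inv_mul M (isUnit_iff_ne_zero.mpr hdet),
        Matrix.one_mulVec]
    calc z = M⁻¹ *ᵥ (M *ᵥ z) := h1.symm
      _ = M⁻¹ *ᵥ Pi.single (Fin.last N) (z m) := by rw [hMz]
      _ = (z m) • (fun i => M⁻¹ i (Fin.last N)) := by
          rw [Matrix.mulVec_single]
          ext i
          simp [mul_comm]
  rcases lt_or_gt_of_ne hm with hneg|hpos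
  · refine ⟨-(z m), fun i => -(M⁻¹ i (Fin.last N)), by linarith, 
      fun j => sgns_neg (tu_inv_mem hMTU hdet _ _), ?_⟩
    ext i
    have h := congrFun hzf i
    simp only [Pi.smul_apply, smul_eq_mul, Pi.neg_apply] at h ⊢
    rw [h]; ring
  · exact ⟨z m, _, hpos, fun j => tu_inv_mem hMTU hdet _ _, hzf⟩

/-- Cone decomposition with Cramer-type bounds: any `u` in the cone `{z : Bz ≤ 0}` for a TU
matrix `B` is a nonnegative combination of at most `n` vectors of the cone whose entries are
all `0, 1, -1`. -/
lemma cone_decomp {n : ℕ} {q : Type*} [Fintype q] {B : Matrix q (Fin n) ℝ}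
    (hB : B.IsTotallyUnimodular) (u : Fin n → ℝ) (hu : ∀ i, B.mulVec u i ≤ 0) :
    ∃ (t : ℕ), t ≤ n ∧ ∃ (lam : Fin t → ℝ) (d : Fin t → (Fin n → ℝ)),
      (∀ k, 0 ≤ lam k) ∧ (∀ k j, d k j ∈ sgns) ∧ (∀ k i, B.mulVec (d k) i ≤ 0) ∧
      u = ∑ k, lam k • d k := by
  classical
  by_cases hu0 : u = 0
  · exact ⟨0, Nat.zero_le n, Fin.elim0, Fin.elim0, (fun k => k.elim0), (fun k => k.elim0),
      (fun k => k.elim0), by simp [hu0]⟩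
  set σ : Fin n → ℝ := fun j => if 0 ≤ u j then 1 else -1 with hσ
  set U : Matrix (Fin n ⊕ Fin n) (Fin n) ℝ := Matrix.of (Sum.elim
      (fun j' => Pi.single j' (-σ j'))
      (fun j' => Pi.single j' (if u j' = 0 then 1 else -σ j'))) with hU
  set Bh := Matrix.fromRows B U with hBhdef
  have hσval : ∀ j, σ j = if 0 ≤ u j then 1 else -1 := fun j => rfl
  have hBhTU : Bh.IsTotallyUnimodular := by
    apply hB.fromRows_unitlike
    rintro _ (j'|j')
    · refine ⟨j', if 0 ≤ u j' then SignType.neg else SignType.pos, ?_⟩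
      have hrow : U (Sum.inl j') = Pi.single j' (-σ j') := rfl
      rw [hrow]
      congr 1
      rw [hσval j']
      split_ifs with h <;> simp
    · by_cases h1 : u j' = 0
      · refine ⟨j', SignType.pos, ?_⟩
        have hrow : U (Sum.inr j') = Pi.single j' (if u j' = 0 then 1 else -σ j') := rfl
        rw [hrow]
        congr 1
        rw [if_pos h1]
        simp
      · refine ⟨j', if 0 ≤ u j' then SignType.neg else SignType.pos, ?_⟩
        have hrow : U (Sum.inr j') = Pi.single j' (if u j' = 0 then 1 else -σ j') := rfl
        rw [hrow]
        congr 1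
        rw [if_neg h1, hσval j']
        split_ifs with h2 <;> simp
  -- basic mulVec computations
  have hmv1 : ∀ (v : Fin n → ℝ) (j' : Fin n), Bh.mulVec v (Sum.inr (Sum.inl j'))
      = -σ j' * v j' := by
    intro v j'
    rw [hBhdef, Matrix.fromRows_mulVec]
    show U.mulVec v (Sum.inl j') = _
    show U (Sum.inl j') ⬝ᵥ v = _
    have : U (Sum.inl j') = Pi.single j' (-σ j') := rfl
    rw [this, single_dotProduct]
  have hmv2 : ∀ (v : Fin n → ℝ) (j' : Fin n), Bh.mulVec v (Sum.inr (Sum.inr j'))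
      = (if u j' = 0 then 1 else -σ j') * v j' := by
    intro v j'
    rw [hBhdef, Matrix.fromRows_mulVec]
    show U (Sum.inr j') ⬝ᵥ v = _
    have : U (Sum.inr j') = Pi.single j' (if u j' = 0 then 1 else -σ j') := rfl
    rw [this, single_dotProduct]
  have hmv0 : ∀ (v : Fin n → ℝ) (i : q), Bh.mulVec v (Sum.inl i) = B.mulVec v i := by
    intro v i
    rw [hBhdef, Matrix.fromRows_mulVec]
    rfl
  -- u is in the big cone
  have hBhu : ∀ i, Bh.mulVec u i ≤ 0 := by
    rintro (i|j'|j')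
    · rw [hmv0]; exact hu i
    · rw [hmv1, hσval j']
      split_ifs with h <;> simp <;> linarith
    · rw [hmv2]
      by_cases h1 : u j' = 0
      · rw [if_pos h1, h1]; simp
      · rw [if_neg h1, hσval j']
        split_ifs with h <;> simp <;> linarith
  -- in the cone, σ-weighted entries are absolute values
  have habs : ∀ v : Fin n → ℝ, (∀ i, Bh.mulVec v i ≤ 0) → ∀ j, σ j * v j = |v j| := by
    intro v hv j
    have h1 := hv (Sum.inr (Sum.inl j))
    rw [hmv1] at h1
    rw [hσval j] at h1 ⊢
    split_ifs at h1 ⊢ with h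
    · have hv : 0 ≤ v j := by linarith
      rw [abs_of_nonneg hv]; ring
    · have hv : v j ≤ 0 := by linarith
      rw [abs_of_nonpos hv]; ring
  set S : ℝ := σ ⬝ᵥ u with hS
  have hSpos : 0 < S := by
    rw [hS]
    have h1 : ∀ j, σ j * u j = |u j| := habs u hBhu
    have : σ ⬝ᵥ u = ∑ j, |u j| := by
      rw [dotProduct]
      exact Finset.sum_congr rfl (fun j _ => h1 j)
    rw [this]
    obtain ⟨j₀, hj₀⟩ : ∃ j, u j ≠ 0 := by
      by_contra h; push_neg at h; exact hu0 (funext h)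
    exact Finset.sum_pos' (fun j _ => abs_nonneg _) ⟨j₀, Finset.mem_univ _, abs_pos.mpr hj₀⟩
  set P : Set (Fin n → ℝ) := {x : Fin n → ℝ | (∀ i, Bh.mulVec x i ≤ 0) ∧ σ ⬝ᵥ x = 1} with hP
  have hPmem : S⁻¹ • u ∈ P := by
    constructor
    · intro i
      rw [Matrix.mulVec_smul]
      have := hBhu i
      simp only [Pi.smul_apply, smul_eq_mul]
      have hSinv : (0:ℝ) ≤ S⁻¹ := (inv_nonneg).mpr hSpos.le
      exact mul_nonpos_of_nonneg_of_nonpos hSinv this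
    · rw [dotProduct_smul]
      simp only [smul_eq_mul]
      rw [← hS]
      exact inv_mul_cancel₀ hSpos.ne'
  have hPconv : Convex ℝ P := by
    intro x hx y hy a b ha hb hab
    constructor
    · intro i
      rw [Matrix.mulVec_add, Matrix.mulVec_smul, Matrix.mulVec_smul]
      simp only [Pi.add_apply, Pi.smul_apply, smul_eq_mul]
      have := hx.1 i; have := hy.1 i
      nlinarith [hx.1 i, hy.1 i]
    · rw [dotProduct_add, dotProduct_smul, dotProduct_smul, hx.2, hy.2]
      simpa using hab
  have hPclosed : IsClosed P := by
    have h1 : IsClosed {x : Fin n → ℝ | ∀ i, Bh.mulVec x i ≤ 0} := by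
      have : {x : Fin n → ℝ | ∀ i, Bh.mulVec x i ≤ 0}
          = ⋂ i, {x : Fin n → ℝ | Bh.mulVec x i ≤ 0} := by
        ext x; simp
      rw [this]
      refine isClosed_iInter (fun i => ?_)
      have hc : Continuous (fun x : Fin n → ℝ => Bh.mulVec x i) := by
        have : (fun x : Fin n → ℝ => Bh.mulVec x i) = fun x => ∑ j, Bh i j * x j := rfl
        rw [this]
        exact continuous_finset_sum _ (fun j _ => continuous_const.mul (continuous_apply j))
      exact isClosed_le hc continuous_const
    have h2 : IsClosed {x : Fin n → ℝ | σ ⬝ᵥ x = 1} := by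
      have hc : Continuous (fun x : Fin n → ℝ => σ ⬝ᵥ x) := by
        have : (fun x : Fin n → ℝ => σ ⬝ᵥ x) = fun x => ∑ j, σ j * x j := rfl
        rw [this]
        exact continuous_finset_sum _ (fun j _ => continuous_const.mul (continuous_apply j))
      exact isClosed_eq hc continuous_const
    exact (h1.inter h2)
  have hPbdd : P ⊆ Metric.closedBall 0 1 := by
    intro x hx
    rw [Metric.mem_closedBall, dist_zero_right]
    rw [pi_norm_le_iff_of_nonneg (by norm_num : (0:ℝ) ≤ 1)]
    intro j
    rw [Real.norm_eq_abs, ← habs x hx.1 j]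
    have h2 : ∀ j' ∈ Finset.univ, 0 ≤ σ j' * x j' := by
      intro j' _
      rw [habs x hx.1 j']
      exact abs_nonneg _
    calc σ j * x j ≤ ∑ j', σ j' * x j' := Finset.single_le_sum h2 (Finset.mem_univ j)
      _ = 1 := hx.2
  have hPcomp : IsCompact P :=
    Metric.isCompact_of_isClosed_isBounded hPclosed
      (Metric.isBounded_closedBall.subset hPbdd)
  -- Krein-Milman
  have hKM := closure_convexHull_extremePoints hPcomp hPconv
  set E := P.extremePoints ℝ with hE
  -- extreme points are finitely many, each a positive multiple of a sign vector
  have hEstruct : ∀ z ∈ E, ∃ (t : ℝ) (d : Fin n → ℝ),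
      0 < t ∧ (∀ j, d j ∈ sgns) ∧ z = t • d := fun z hz => extreme_structure hBhTU σ hz
  have hEfin : E.Finite := by
    set Φ : (Fin n → SignType) → (Fin n → ℝ) :=
      fun st => ((σ ⬝ᵥ (fun j => ((st j : ℝ))))⁻¹) • (fun j => ((st j : ℝ))) with hΦ
    refine Set.Finite.subset (Set.finite_range Φ) ?_
    intro z hz
    obtain ⟨t, d, ht, hd, rfl⟩ := hEstruct z hz
    have hzP : t • d ∈ P := extremePoints_subset hz
    choose st hst using hd
    have hdst : (fun j => ((st j : ℝ))) = d := funext hst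
    have hσd : σ ⬝ᵥ d = t⁻¹ := by
      have := hzP.2
      rw [dotProduct_smul, smul_eq_mul] at this
      field_simp at this ⊢
      linarith [this]
    refine ⟨st, ?_⟩
    rw [hΦ]
    simp only []
    rw [hdst, hσd, inv_inv]
  have hPhull : P = convexHull ℝ E := by
    rw [← hKM, (hEfin.isClosed_convexHull ℝ).closure_eq]
  -- decompose S⁻¹ • u
  have hmem2 : S⁻¹ • u ∈ convexHull ℝ E := hPhull ▸ hPmem
  rw [convexHull_eq] at hmem2
  obtain ⟨ι, tset, wf, zf, hw0, hw1, hzE, hcm⟩ := hmem2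
  rw [Finset.centerMass_eq_of_sum_1 _ _ hw1] at hcm
  -- u as a conic combination over tset
  have hu_eq : u = ∑ i ∈ tset, (S * wf i) • zf i := by
    have : u = S • (S⁻¹ • u) := by
      rw [smul_smul, mul_inv_cancel₀ hSpos.ne', one_smul]
    rw [this, ← hcm, Finset.smul_sum]
    exact Finset.sum_congr rfl (fun i _ => by rw [smul_smul])
  -- choose sign-vector decompositions of all the extreme points used
  have hzf : ∀ i ∈ tset, ∃ (lam : ℝ) (d : Fin n → ℝ), 0 ≤ lam ∧ (∀ j, d j ∈ sgns) ∧
      (∀ r, Bh.mulVec d r ≤ 0) ∧ (S * wf i) • zf i = lam • d := by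
    intro i hi
    obtain ⟨t, d, ht, hd, hzfi⟩ := hEstruct (zf i) (hzE i hi)
    have hzP : zf i ∈ P := extremePoints_subset (hzE i hi)
    refine ⟨S * wf i * t, d, ?_, hd, ?_, ?_⟩
    · have := hw0 i hi
      positivity
    · intro r
      have h1 : Bh.mulVec (zf i) r ≤ 0 := hzP.1 r
      have h2 : d = t⁻¹ • zf i := by
        rw [hzfi, smul_smul, inv_mul_cancel₀ ht.ne', one_smul]
      rw [h2, Matrix.mulVec_smul]
      simp only [Pi.smul_apply, smul_eq_mul]
      exact mul_nonpos_of_nonneg_of_nonpos (inv_nonneg.mpr ht.le) h1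
    · rw [hzfi, smul_smul]
  choose lamf df hlamf hdf hconef heqf using hzf
  -- turn the Finset sum into a Fin-indexed sum
  have hu_eq2 : u = ∑ x ∈ tset.attach, lamf x.1 x.2 • df x.1 x.2 := by
    rw [hu_eq, ← Finset.sum_attach tset (fun i => (S * wf i) • zf i)]
    exact Finset.sum_congr rfl (fun x _ => heqf x.1 x.2)
  set L := tset.attach.card with hL
  have hcardeq : Fintype.card {x // x ∈ tset} = L := by
    rw [hL, Finset.card_attach, ← Fintype.card_coe]
  set ψ : {x // x ∈ tset} ≃ Fin L := Fintype.equivFinOfCardEq hcardeq with hψ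
  have hu_eq3 : u = ∑ k : Fin L, lamf (ψ.symm k).1 (ψ.symm k).2 • df (ψ.symm k).1 (ψ.symm k).2 := by
    rw [hu_eq2, ← Finset.univ_eq_attach]
    exact (Equiv.sum_comp ψ.symm (fun x => lamf x.1 x.2 • df x.1 x.2)).symm
  -- apply Carathéodory
  obtain ⟨t, htn, mu, g, hmu, hg, hsum⟩ := cone_caratheodory
    (fun d => (∀ j, d j ∈ sgns) ∧ (∀ r, Bh.mulVec d r ≤ 0)) L
    (fun k => lamf (ψ.symm k).1 (ψ.symm k).2) (fun k => df (ψ.symm k).1 (ψ.symm k).2)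
    (fun k => hlamf _ _) (fun k => ⟨hdf _ _, hconef _ _⟩)
  refine ⟨t, htn, mu, g, hmu, fun k => (hg k).1, fun k i => ?_, by rw [hu_eq3, ← hsum]⟩
  have := (hg k).2 (Sum.inl i)
  rwa [hmv0] at this

lemma sgns_int {x : ℝ} (hx : x ∈ sgns) : ∃ z : ℤ, (z : ℝ) = x := by
  rcases mem_sgns_iff.mp hx with rfl|rfl|rfl
  exacts [⟨0, by norm_num⟩, ⟨1, by norm_num⟩, ⟨-1, by norm_num⟩]

lemma int_ge_one {x : ℝ} (h : ∃ z : ℤ, (z : ℝ) = x) (hx : 0 < x) : 1 ≤ x := by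
  obtain ⟨z, rfl⟩ := h
  have hz : (0:ℤ) < z := by exact_mod_cast hx
  have : (1:ℤ) ≤ z := by omega
  exact_mod_cast this

lemma int_le_negone {x : ℝ} (h : ∃ z : ℤ, (z : ℝ) = x) (hx : x < 0) : x ≤ -1 := by
  obtain ⟨z, rfl⟩ := h
  have hz : z < (0:ℤ) := by exact_mod_cast hx
  have : z ≤ (-1:ℤ) := by omega
  exact_mod_cast this

lemma mv_sum {p n : ℕ} (A : Matrix (Fin p) (Fin n) ℝ) {t : ℕ} (f : Fin t → (Fin n → ℝ)) :
    A.mulVec (∑ k, f k) = ∑ k, A.mulVec (f k) := by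
  induction (Finset.univ : Finset (Fin t)) using Finset.induction with
  | empty => simp [Matrix.mulVec_zero]
  | insert _ _ h ih => rw [Finset.sum_insert h, Finset.sum_insert h, Matrix.mulVec_add, ih]

lemma dot_sum {n : ℕ} (c : Fin n → ℝ) {t : ℕ} (f : Fin t → (Fin n → ℝ)) :
    c ⬝ᵥ (∑ k, f k) = ∑ k, c ⬝ᵥ f k := by
  induction (Finset.univ : Finset (Fin t)) using Finset.induction with
  | empty => simp
  | insert _ _ h ih => rw [Finset.sum_insert h, Finset.sum_insert h, dotProduct_add, ih]

lemma mv_rowscale {p n : ℕ} (A : Matrix (Fin p) (Fin n) ℝ) (s : Fin p → ℝ) (v : Fin n → ℝ)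
    (i : Fin p) : (Matrix.of fun i j => s i * A i j).mulVec v i = s i * A.mulVec v i := by
  simp only [Matrix.mulVec, dotProduct, Matrix.of_apply, Finset.mul_sum]
  exact Finset.sum_congr rfl (fun j _ => by ring)

end SensHelpers

/-- Sensitivity theorem (Schrijver 10.5, totally unimodular case): if `Ã` is a
totally unimodular `p × n` matrix and both programs `max{cᵀx : Ãx ≤ b''}` and
`max{cᵀx : Ãx ≤ b*}` are finite (feasible and bounded above), then for each
optimal solution `x''` of the first there exists an optimal solution `x*` of the
second with `‖x'' − x*‖∞ ≤ n ‖b'' − b*‖∞`. -/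
theorem stmt11 {p n : ℕ} (Atil : Matrix (Fin p) (Fin n) ℝ)
    (hTU : Atil.IsTotallyUnimodular)
    (c : Fin n → ℝ) (b'' bstar : Fin p → ℝ)
    (hfeas'' : ∃ x : Fin n → ℝ, ∀ i, Atil.mulVec x i ≤ b'' i)
    (hbdd'' : ∃ M : ℝ, ∀ x : Fin n → ℝ, (∀ i, Atil.mulVec x i ≤ b'' i) → c ⬝ᵥ x ≤ M)
    (hfeasStar : ∃ x : Fin n → ℝ, ∀ i, Atil.mulVec x i ≤ bstar i)
    (hbddStar : ∃ M : ℝ, ∀ x : Fin n → ℝ, (∀ i, Atil.mulVec x i ≤ bstar i) → c ⬝ᵥ x ≤ M) :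
    ∀ x'' : Fin n → ℝ, (∀ i, Atil.mulVec x'' i ≤ b'' i) →
      (∀ y : Fin n → ℝ, (∀ i, Atil.mulVec y i ≤ b'' i) → c ⬝ᵥ y ≤ c ⬝ᵥ x'') →
      ∃ xstar : Fin n → ℝ,
        (∀ i, Atil.mulVec xstar i ≤ bstar i) ∧
        (∀ y : Fin n → ℝ, (∀ i, Atil.mulVec y i ≤ bstar i) → c ⬝ᵥ y ≤ c ⬝ᵥ xstar) ∧
        normInf (x'' - xstar) ≤ n * normInf (b'' - bstar) := by
  classical
  intro x'' hfeasx hoptx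
  set ε : ℝ := normInf (b'' - bstar) with hε
  have hε0 : 0 ≤ ε := Real.iSup_nonneg (fun i => abs_nonneg _)
  have hεi : ∀ i, |b'' i - bstar i| ≤ ε := by
    intro i
    have h := le_ciSup (f := fun i => |(b'' - bstar) i|)
      (Set.Finite.bddAbove (Set.finite_range _)) i
    simpa [hε, normInf] using h
  -- the optimal value of the second program
  set V : Set ℝ := (fun x => c ⬝ᵥ x) '' {x : Fin n → ℝ | ∀ i, Atil.mulVec x i ≤ bstar i} with hV
  have hVne : V.Nonempty := by
    obtain ⟨x, hx⟩ := hfeasStar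
    exact ⟨c ⬝ᵥ x, ⟨x, hx, rfl⟩⟩
  have hVbdd : BddAbove V := by
    obtain ⟨M, hM⟩ := hbddStar
    exact ⟨M, by rintro _ ⟨x, hx, rfl⟩; exact hM x hx⟩
  set vstar : ℝ := sSup V with hvstar
  have hvub : ∀ x : Fin n → ℝ, (∀ i, Atil.mulVec x i ≤ bstar i) → c ⬝ᵥ x ≤ vstar :=
    fun x hx => le_csSup hVbdd ⟨x, hx, rfl⟩
  -- the compact candidate set
  set K : Set (Fin n → ℝ) := {x : Fin n → ℝ | (∀ i, Atil.mulVec x i ≤ bstar i) ∧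
      ∀ j, |x'' j - x j| ≤ n * ε} with hK
  -- main approximation step
  have hKapprox : ∀ η : ℝ, 0 < η → ∃ y ∈ K, vstar - η < c ⬝ᵥ y := by
    intro η hη
    obtain ⟨v₀, hv₀V, hv₀⟩ := exists_lt_of_lt_csSup hVne
      (show vstar - η < vstar by linarith)
    obtain ⟨x₀, hx₀feas, rfl⟩ := hv₀V
    -- the cone of the direction
    set u : Fin n → ℝ := x'' - x₀ with hu
    set s : Fin p → ℝ := fun i => if 0 ≤ Atil.mulVec u i then -1 else 1 with hs
    have hsval : ∀ i, s i = if 0 ≤ Atil.mulVec u i then -1 else 1 := fun i => rfl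
    have hsmem : ∀ i, s i ∈ sgns := by
      intro i
      rw [hsval i, mem_sgns_iff]
      split_ifs <;> simp
    set B : Matrix (Fin p) (Fin n) ℝ := Matrix.of fun i j => s i * Atil i j with hB
    have hBTU : B.IsTotallyUnimodular := tu_rowScale hTU s hsmem
    have hBu : ∀ i, B.mulVec u i ≤ 0 := by
      intro i
      rw [hB, mv_rowscale, hsval i]
      split_ifs with h
      · linarith
      · push_neg at h
        nlinarith
    obtain ⟨t, htn, lam, d, hlam, hd, hcone, hudecomp⟩ := cone_decomp hBTU u hBu
    -- row values of the generators
    set α : Fin t → Fin p → ℝ := fun k i => Atil.mulVec (d k) i with hα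
    have hαsign : ∀ k i, s i * α k i ≤ 0 := by
      intro k i
      have := hcone k i
      rwa [hB, mv_rowscale] at this
    have hαint : ∀ k i, ∃ z : ℤ, (z : ℝ) = α k i := by
      intro k i
      have : ∀ j, ∃ z : ℤ, (z : ℝ) = Atil i j * d k j := by
        intro j
        exact sgns_int (sgns_mul (hTU.apply i j) (hd k j))
      choose zf hzf using this
      refine ⟨∑ j, zf j, ?_⟩
      rw [hα]
      push_cast
      exact Finset.sum_congr rfl (fun j _ => hzf j)
    -- u's rows are sums
    have hAu : ∀ i, Atil.mulVec u i = ∑ k, lam k * α k i := by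
      intro i
      rw [hudecomp, mv_sum]
      rw [Finset.sum_apply]
      exact Finset.sum_congr rfl (fun k _ => by
        rw [Matrix.mulVec_smul]; simp [hα])
    set m : Fin t → ℝ := fun k => min (lam k) ε with hm
    have hm0 : ∀ k, 0 ≤ m k := fun k => le_min (hlam k) hε0
    have hmle : ∀ k, m k ≤ lam k := fun k => min_le_left _ _
    have hmε : ∀ k, m k ≤ ε := fun k => min_le_right _ _
    set w : Fin n → ℝ := ∑ k, m k • d k with hw
    set v : Fin n → ℝ := ∑ k, (lam k - m k) • d k with hvv
    have huvw : u = v + w := by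
      rw [hudecomp, hvv, hw, ← Finset.sum_add_distrib]
      exact Finset.sum_congr rfl (fun k _ => by rw [← add_smul]; ring_nf)
    -- row computations
    have hAv : ∀ i, Atil.mulVec v i = ∑ k, (lam k - m k) * α k i := by
      intro i
      rw [hvv, mv_sum, Finset.sum_apply]
      exact Finset.sum_congr rfl (fun k _ => by rw [Matrix.mulVec_smul]; simp [hα])
    have hAw : ∀ i, Atil.mulVec w i = ∑ k, m k * α k i := by
      intro i
      rw [hw, mv_sum, Finset.sum_apply]
      exact Finset.sum_congr rfl (fun k _ => by rw [Matrix.mulVec_smul]; simp [hα])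
    set xs : Fin n → ℝ := x₀ + v with hxs
    set y : Fin n → ℝ := x₀ + w with hy
    have hx'' : x'' = x₀ + (v + w) := by
      rw [← huvw, hu]
      ext j
      simp only [Pi.add_apply, Pi.sub_apply]
      ring
    have hxs2 : xs = x'' - w := by
      rw [hxs, hx'']
      ext j
      simp only [Pi.add_apply, Pi.sub_apply]
      ring
    have hy2 : y = x'' - v := by
      rw [hy, hx'']
      ext j
      simp only [Pi.add_apply, Pi.sub_apply]
      ring
    -- row computations for xs and y
    have hAxs : ∀ i, Atil.mulVec xs i = Atil.mulVec x₀ i + ∑ k, (lam k - m k) * α k i := by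
      intro i
      rw [hxs, Matrix.mulVec_add, Pi.add_apply, hAv]
    have hAxs' : ∀ i, Atil.mulVec xs i = Atil.mulVec x'' i - ∑ k, m k * α k i := by
      intro i
      rw [hxs2, Matrix.mulVec_sub, Pi.sub_apply, hAw]
    have hAy : ∀ i, Atil.mulVec y i = Atil.mulVec x₀ i + ∑ k, m k * α k i := by
      intro i
      rw [hy, Matrix.mulVec_add, Pi.add_apply, hAw]
    have hAy' : ∀ i, Atil.mulVec y i = Atil.mulVec x'' i - ∑ k, (lam k - m k) * α k i := by
      intro i
      rw [hy2, Matrix.mulVec_sub, Pi.sub_apply, hAv]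
    -- feasibility of xs for bstar
    have hxsfeas : ∀ i, Atil.mulVec xs i ≤ bstar i := by
      intro i
      by_cases hsi : 0 ≤ Atil.mulVec u i
      · -- here all α k i ≥ 0
        have hαpos : ∀ k, 0 ≤ α k i := by
          intro k
          have h1 := hαsign k i
          rw [hsval i, if_pos hsi] at h1
          linarith
        by_cases hex : ∃ k, ε < lam k ∧ α k i ≠ 0
        · obtain ⟨k₀, hk₀ε, hk₀α⟩ := hex
          have hα1 : 1 ≤ α k₀ i :=
            int_ge_one (hαint k₀ i) (lt_of_le_of_ne (hαpos k₀) (Ne.symm hk₀α))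
          have hmk₀ : m k₀ = ε := min_eq_right hk₀ε.le
          have hsum : ε ≤ ∑ k, m k * α k i := by
            have h1 : m k₀ * α k₀ i ≤ ∑ k, m k * α k i :=
              Finset.single_le_sum (fun k _ => mul_nonneg (hm0 k) (hαpos k))
                (Finset.mem_univ k₀)
            have h2 : ε ≤ m k₀ * α k₀ i := by
              rw [hmk₀]
              nlinarith
            linarith
          have hb : b'' i - ε ≤ bstar i := by
            have := (abs_le.mp (hεi i)).2
            linarith
          rw [hAxs']
          have := hfeasx i
          linarith
        · push_neg at hex
          have hzero : ∀ k, (lam k - m k) * α k i = 0 := by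
            intro k
            by_cases hkε : ε < lam k
            · rw [hex k hkε, mul_zero]
            · push_neg at hkε
              have hmk : m k = lam k := min_eq_left hkε
              rw [hmk]
              simp
          rw [hAxs']
          have h2 : ∑ k, m k * α k i = ∑ k, lam k * α k i := by
            refine Finset.sum_congr rfl (fun k _ => ?_)
            have := hzero k
            nlinarith [hzero k]
          rw [h2, ← hAu]
          have h3 : Atil.mulVec x'' i - Atil.mulVec u i = Atil.mulVec x₀ i := by
            have : Atil.mulVec x'' i = Atil.mulVec x₀ i + Atil.mulVec u i := by
              have h4 : x'' = x₀ + u := by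
                rw [hu]
                ext j
                simp only [Pi.add_apply, Pi.sub_apply]
                ring
              rw [h4, Matrix.mulVec_add, Pi.add_apply]
            linarith
          rw [h3]
          exact hx₀feas i
      · -- here all α k i ≤ 0
        have hαneg : ∀ k, α k i ≤ 0 := by
          intro k
          have h1 := hαsign k i
          rw [hsval i, if_neg hsi] at h1
          linarith
        rw [hAxs]
        have hsum : ∑ k, (lam k - m k) * α k i ≤ 0 :=
          Finset.sum_nonpos (fun k _ =>
            mul_nonpos_of_nonneg_of_nonpos (by linarith [hmle k]) (hαneg k))
        have := hx₀feas i
        linarith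
    -- feasibility of y for b''
    have hyfeas : ∀ i, Atil.mulVec y i ≤ b'' i := by
      intro i
      by_cases hsi : 0 ≤ Atil.mulVec u i
      · have hαpos : ∀ k, 0 ≤ α k i := by
          intro k
          have h1 := hαsign k i
          rw [hsval i, if_pos hsi] at h1
          linarith
        rw [hAy']
        have hsum : 0 ≤ ∑ k, (lam k - m k) * α k i :=
          Finset.sum_nonneg (fun k _ =>
            mul_nonneg (by linarith [hmle k]) (hαpos k))
        have := hfeasx i
        linarith
      · have hαneg : ∀ k, α k i ≤ 0 := by
          intro k
          have h1 := hαsign k i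
          rw [hsval i, if_neg hsi] at h1
          linarith
        by_cases hex : ∃ k, ε ≤ lam k ∧ α k i ≠ 0
        · obtain ⟨k₀, hk₀ε, hk₀α⟩ := hex
          have hα1 : α k₀ i ≤ -1 :=
            int_le_negone (hαint k₀ i) (lt_of_le_of_ne (hαneg k₀) hk₀α)
          have hmk₀ : m k₀ = ε := min_eq_right hk₀ε
          have hsum : ∑ k, m k * α k i ≤ -ε := by
            have h1 : -(m k₀ * α k₀ i) ≤ ∑ k, -(m k * α k i) :=
              Finset.single_le_sum
                (fun k _ => by
                  have h := mul_nonpos_of_nonneg_of_nonpos (hm0 k) (hαneg k)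
                  exact neg_nonneg.mpr h)
                (Finset.mem_univ k₀)
            rw [Finset.sum_neg_distrib] at h1
            have h2 : m k₀ * α k₀ i ≤ -ε := by
              rw [hmk₀]
              nlinarith
            linarith
          have hb : bstar i - ε ≤ b'' i := by
            have := (abs_le.mp (hεi i)).1
            linarith
          rw [hAy]
          have := hx₀feas i
          linarith
        · push_neg at hex
          have h2 : ∑ k, m k * α k i = ∑ k, lam k * α k i := by
            refine Finset.sum_congr rfl (fun k _ => ?_)
            by_cases hkε : ε ≤ lam k
            · rw [hex k hkε, mul_zero, mul_zero]
            · push_neg at hkε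
              have hmk : m k = lam k := min_eq_left hkε.le
              rw [hmk]
          rw [hAy, h2, ← hAu]
          have h4 : x'' = x₀ + u := by
            rw [hu]
            ext j
            simp only [Pi.add_apply, Pi.sub_apply]
            ring
          have h5 : Atil.mulVec x₀ i + Atil.mulVec u i = Atil.mulVec x'' i := by
            rw [h4, Matrix.mulVec_add, Pi.add_apply]
          rw [h5]
          exact hfeasx i
    -- objective values
    have hcv : 0 ≤ c ⬝ᵥ v := by
      have h1 : c ⬝ᵥ y ≤ c ⬝ᵥ x'' := hoptx y hyfeas
      have h2 : c ⬝ᵥ y = c ⬝ᵥ x₀ + c ⬝ᵥ w := by rw [hy, dotProduct_add]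
      have h3 : c ⬝ᵥ x'' = c ⬝ᵥ x₀ + (c ⬝ᵥ v + c ⬝ᵥ w) := by
        rw [hx'', dotProduct_add, dotProduct_add]
      linarith
    have hcxs : vstar - η < c ⬝ᵥ xs := by
      have h1 : c ⬝ᵥ xs = c ⬝ᵥ x₀ + c ⬝ᵥ v := by rw [hxs, dotProduct_add]
      linarith
    -- coordinate bound
    have hcoord : ∀ j, |x'' j - xs j| ≤ n * ε := by
      intro j
      have h1 : x'' j - xs j = w j := by
        rw [hxs2]
        simp only [Pi.sub_apply]
        ring
      rw [h1, hw, Finset.sum_apply]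
      have h2 : |∑ k, (m k • d k) j| ≤ ∑ k, |(m k • d k) j| :=
        Finset.abs_sum_le_sum_abs _ _
      have h3 : ∀ k, |(m k • d k) j| ≤ ε := by
        intro k
        simp only [Pi.smul_apply, smul_eq_mul, abs_mul, abs_of_nonneg (hm0 k)]
        calc m k * |d k j| ≤ ε * 1 :=
              mul_le_mul (hmε k) (sgns_abs_le (hd k j)) (abs_nonneg _) hε0
          _ = ε := mul_one ε
      calc |∑ k, (m k • d k) j| ≤ ∑ k, |(m k • d k) j| := h2
        _ ≤ ∑ _k : Fin t, ε := Finset.sum_le_sum (fun k _ => h3 k)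
        _ = t * ε := by rw [Finset.sum_const, Finset.card_univ, Fintype.card_fin, nsmul_eq_mul]
        _ ≤ n * ε := by
            have : (t : ℝ) ≤ n := by exact_mod_cast htn
            nlinarith
    exact ⟨xs, ⟨hxsfeas, hcoord⟩, hcxs⟩
  -- K is nonempty and compact
  have hKne : K.Nonempty := by
    obtain ⟨y, hy, -⟩ := hKapprox 1 one_pos
    exact ⟨y, hy⟩
  have hKclosed : IsClosed K := by
    have h1 : K = {x : Fin n → ℝ | ∀ i, Atil.mulVec x i ≤ bstar i}
        ∩ {x : Fin n → ℝ | ∀ j, |x'' j - x j| ≤ n * ε} := rfl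
    rw [h1]
    refine IsClosed.inter ?_ ?_
    · have : {x : Fin n → ℝ | ∀ i, Atil.mulVec x i ≤ bstar i}
          = ⋂ i, {x : Fin n → ℝ | Atil.mulVec x i ≤ bstar i} := by ext x; simp
      rw [this]
      refine isClosed_iInter (fun i => ?_)
      have hc : Continuous (fun x : Fin n → ℝ => Atil.mulVec x i) := by
        have : (fun x : Fin n → ℝ => Atil.mulVec x i) = fun x => ∑ j, Atil i j * x j := rfl
        rw [this]
        exact continuous_finset_sum _ (fun j _ => continuous_const.mul (continuous_apply j))
      exact isClosed_le hc continuous_const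
    · have : {x : Fin n → ℝ | ∀ j, |x'' j - x j| ≤ n * ε}
          = ⋂ j, {x : Fin n → ℝ | |x'' j - x j| ≤ n * ε} := by ext x; simp
      rw [this]
      refine isClosed_iInter (fun j => ?_)
      exact isClosed_le ((continuous_const.sub (continuous_apply j)).abs) continuous_const
  have hKbdd : K ⊆ Metric.closedBall 0 (‖x''‖ + n * ε) := by
    intro x hx
    rw [Metric.mem_closedBall, dist_zero_right]
    have hnn : (0:ℝ) ≤ ‖x''‖ + n * ε := by positivity
    rw [pi_norm_le_iff_of_nonneg hnn]
    intro j
    rw [Real.norm_eq_abs]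
    have h1 : |x j| ≤ |x'' j| + |x'' j - x j| := by
      have h0 := abs_sub_abs_le_abs_sub (x j) (x'' j)
      rw [abs_sub_comm] at h0
      linarith
    have h2 : |x'' j| ≤ ‖x''‖ := by
      have := norm_le_pi_norm x'' j
      rwa [Real.norm_eq_abs] at this
    have h3 := hx.2 j
    linarith
  have hKcomp : IsCompact K :=
    Metric.isCompact_of_isClosed_isBounded hKclosed
      (Metric.isBounded_closedBall.subset hKbdd)
  have hcont : Continuous (fun x : Fin n → ℝ => c ⬝ᵥ x) := by
    have : (fun x : Fin n → ℝ => c ⬝ᵥ x) = fun x => ∑ j, c j * x j := rfl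
    rw [this]
    exact continuous_finset_sum _ (fun j _ => continuous_const.mul (continuous_apply j))
  obtain ⟨xstar, hxstarK, hmax⟩ := hKcomp.exists_isMaxOn hKne hcont.continuousOn
  have hvs : vstar ≤ c ⬝ᵥ xstar := by
    by_contra hlt
    push_neg at hlt
    obtain ⟨y, hyK, hy⟩ := hKapprox (vstar - c ⬝ᵥ xstar) (by linarith)
    have := isMaxOn_iff.mp hmax y hyK
    linarith
  refine ⟨xstar, hxstarK.1, fun y hy => le_trans (hvub y hy) hvs, ?_⟩
  show (⨆ j, |(x'' - xstar) j|) ≤ (n : ℝ) * ε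
  refine Real.iSup_le (fun j => ?_) (mul_nonneg (Nat.cast_nonneg n) hε0)
  have h := hxstarK.2 j
  simpa using h
end
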